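/- arXiv:1210.3609 — 5 statements merged into one kernel-verified Lean document; each statement's English description precedes it below -/
import Mathlib

section
/- For every n ≥ 0, the finite-horizon value function V^n is convex in each coordinate separately: for all c ∈ [0,1], all p, p' ∈ [0,1] and all p1, p2 ∈ [0,1], V^n(c·p + (1−c)·p', p2) ≤ c·V^n(p, p2) + (1−c)·V^n(p', p2) and V^n(p1, c·p + (1−c)·p') ≤ c·V^n(p1, p) + (1−c)·V^n(p1, p'). -/
open Set

noncomputable section

/-- Belief update for an unobserved channel: `T p = λ0 + (λ1 - λ0) p`. -/
def Tr (l0 l1 p : ℝ) : ℝ := l0 + (l1 - l0) * p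

/-- The four power allocation actions. -/
inductive PAct
  | Bb  -- balanced
  | B1  -- bet on channel 1
  | B2  -- bet on channel 2
  | Br  -- conservative

/-- Action-value functional `W_a` computed from a function `W`. -/
def Q (l0 l1 β Rl Rh Cl Ch : ℝ) (W : ℝ → ℝ → ℝ) : PAct → ℝ → ℝ → ℝ
  | PAct.Bb => fun p1 p2 =>
      (p1 + p2) * (Rl + Cl) - 2 * Cl +
        β * ((1 - p1) * (1 - p2) * W l0 l0 + p1 * p2 * W l1 l1 +
             p1 * (1 - p2) * W l1 l0 + (1 - p1) * p2 * W l0 l1)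
  | PAct.B1 => fun p1 p2 =>
      (Rh + Ch) * p1 - Ch +
        β * (p1 * W l1 (Tr l0 l1 p2) + (1 - p1) * W l0 (Tr l0 l1 p2))
  | PAct.B2 => fun p1 p2 =>
      (Rh + Ch) * p2 - Ch +
        β * (p2 * W (Tr l0 l1 p1) l1 + (1 - p2) * W (Tr l0 l1 p1) l0)
  | PAct.Br => fun p1 p2 => β * W (Tr l0 l1 p1) (Tr l0 l1 p2)

/-- The Bellman operator `L W = max over the four actions of W_a`. -/
def Bop (l0 l1 β Rl Rh Cl Ch : ℝ) (W : ℝ → ℝ → ℝ) (p1 p2 : ℝ) : ℝ :=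
  max (max (Q l0 l1 β Rl Rh Cl Ch W PAct.Bb p1 p2)
           (Q l0 l1 β Rl Rh Cl Ch W PAct.B1 p1 p2))
      (max (Q l0 l1 β Rl Rh Cl Ch W PAct.B2 p1 p2)
           (Q l0 l1 β Rl Rh Cl Ch W PAct.Br p1 p2))

/-- Boundedness on the belief space `[0,1] × [0,1]`. -/
def BddOnSq (W : ℝ → ℝ → ℝ) : Prop :=
  ∃ M : ℝ, ∀ p1 ∈ Icc (0:ℝ) 1, ∀ p2 ∈ Icc (0:ℝ) 1, |W p1 p2| ≤ M

/-- Being a fixed point of the Bellman operator on the belief space. -/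
def IsFix (l0 l1 β Rl Rh Cl Ch : ℝ) (V : ℝ → ℝ → ℝ) : Prop :=
  ∀ p1 ∈ Icc (0:ℝ) 1, ∀ p2 ∈ Icc (0:ℝ) 1,
    V p1 p2 = Bop l0 l1 β Rl Rh Cl Ch V p1 p2

/-- Finite-horizon value iteration: `V⁰ ≡ 0`, `V^{n+1} = L V^n`. -/
def Vit (l0 l1 β Rl Rh Cl Ch : ℝ) : ℕ → ℝ → ℝ → ℝ
  | 0 => fun _ _ => 0
  | n + 1 => Bop l0 l1 β Rl Rh Cl Ch (Vit l0 l1 β Rl Rh Cl Ch n)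


/-- Max of four convex-dominated terms. -/
lemma max4_convex_le {x1 x2 x3 x4 y1 y2 y3 y4 z1 z2 z3 z4 c : ℝ}
    (hc0 : 0 ≤ c) (hc1 : c ≤ 1)
    (h1 : x1 ≤ c * y1 + (1 - c) * z1) (h2 : x2 ≤ c * y2 + (1 - c) * z2)
    (h3 : x3 ≤ c * y3 + (1 - c) * z3) (h4 : x4 ≤ c * y4 + (1 - c) * z4) :
    max (max x1 x2) (max x3 x4) ≤
      c * max (max y1 y2) (max y3 y4) + (1 - c) * max (max z1 z2) (max z3 z4) := by
  have hc1' : 0 ≤ 1 - c := by linarith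
  have key : ∀ x y z : ℝ, x ≤ c * y + (1 - c) * z →
      y ≤ max (max y1 y2) (max y3 y4) → z ≤ max (max z1 z2) (max z3 z4) →
      x ≤ c * max (max y1 y2) (max y3 y4) + (1 - c) * max (max z1 z2) (max z3 z4) := by
    intro x y z h hy hz
    calc x ≤ c * y + (1 - c) * z := h
    _ ≤ _ := add_le_add (mul_le_mul_of_nonneg_left hy hc0)
          (mul_le_mul_of_nonneg_left hz hc1')
  refine max_le (max_le ?_ ?_) (max_le ?_ ?_)
  · exact key _ _ _ h1 (le_max_of_le_left (le_max_left _ _)) (le_max_of_le_left (le_max_left _ _))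
  · exact key _ _ _ h2 (le_max_of_le_left (le_max_right _ _)) (le_max_of_le_left (le_max_right _ _))
  · exact key _ _ _ h3 (le_max_of_le_right (le_max_left _ _)) (le_max_of_le_right (le_max_left _ _))
  · exact key _ _ _ h4 (le_max_of_le_right (le_max_right _ _)) (le_max_of_le_right (le_max_right _ _))

lemma Tr_mem {l0 l1 p : ℝ} (hl0 : l0 ∈ Icc (0:ℝ) 1) (hl1 : l1 ∈ Icc (0:ℝ) 1)
    (hl01 : l0 < l1) (hp : p ∈ Icc (0:ℝ) 1) : Tr l0 l1 p ∈ Icc (0:ℝ) 1 := by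
  obtain ⟨h0, h1⟩ := hl0
  obtain ⟨h0', h1'⟩ := hl1
  obtain ⟨hp0, hp1⟩ := hp
  constructor <;> unfold Tr <;> nlinarith

lemma Tr_affine (l0 l1 c p p' : ℝ) :
    Tr l0 l1 (c * p + (1 - c) * p') = c * Tr l0 l1 p + (1 - c) * Tr l0 l1 p' := by
  unfold Tr; ring

/-- Each finite-horizon value function is convex in each coordinate separately. -/
theorem finite_horizon_convex
    (l0 l1 β Rl Rh Cl Ch : ℝ)
    (hl0 : l0 ∈ Icc (0:ℝ) 1) (hl1 : l1 ∈ Icc (0:ℝ) 1) (hl01 : l0 < l1)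
    (hβ0 : 0 ≤ β) (hβ1 : β < 1)
    (hRl : 0 < Rl) (hRh : 0 < Rh) (hCl : 0 < Cl) (hCh : 0 < Ch)
    (hRlh : Rl < Rh) (hRh2 : Rh < 2 * Rl)
    (hClh : Cl < Ch) (hCh2 : Ch < 2 * Cl)
    (hRhCh : Ch < Rh) (hRlCl : Cl < Rl)
    (n : ℕ) (c : ℝ) (hc : c ∈ Icc (0:ℝ) 1)
    (p : ℝ) (hp : p ∈ Icc (0:ℝ) 1) (p' : ℝ) (hp' : p' ∈ Icc (0:ℝ) 1)
    (p1 : ℝ) (hp1 : p1 ∈ Icc (0:ℝ) 1) (p2 : ℝ) (hp2 : p2 ∈ Icc (0:ℝ) 1) :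
    Vit l0 l1 β Rl Rh Cl Ch n (c * p + (1 - c) * p') p2 ≤
      c * Vit l0 l1 β Rl Rh Cl Ch n p p2 + (1 - c) * Vit l0 l1 β Rl Rh Cl Ch n p' p2 ∧
    Vit l0 l1 β Rl Rh Cl Ch n p1 (c * p + (1 - c) * p') ≤
      c * Vit l0 l1 β Rl Rh Cl Ch n p1 p + (1 - c) * Vit l0 l1 β Rl Rh Cl Ch n p1 p' := by
    induction n generalizing c hc p hp p' hp' p1 hp1 p2 hp2 with
  | zero =>
      simp [Vit]
  | succ n ih =>
      obtain ⟨hc0, hc1⟩ := hc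
      -- the combined points are in [0,1]
      have hcomb : ∀ a b : ℝ, a ∈ Icc (0:ℝ) 1 → b ∈ Icc (0:ℝ) 1 →
          c * a + (1 - c) * b ∈ Icc (0:ℝ) 1 := by
        intro a b ha hb
        constructor
        · nlinarith [ha.1, hb.1]
        · nlinarith [ha.2, hb.2]
      set W := Vit l0 l1 β Rl Rh Cl Ch n with hW
      -- induction hypotheses in convenient form
      have IH1 : ∀ a ∈ Icc (0:ℝ) 1, ∀ b ∈ Icc (0:ℝ) 1, ∀ y ∈ Icc (0:ℝ) 1,
          W (c * a + (1 - c) * b) y ≤ c * W a y + (1 - c) * W b y := by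
        intro a ha b hb y hy
        exact (ih c ⟨hc0, hc1⟩ _ ha _ hb _ hy _ hy).1
      have IH2 : ∀ a ∈ Icc (0:ℝ) 1, ∀ b ∈ Icc (0:ℝ) 1, ∀ y ∈ Icc (0:ℝ) 1,
          W y (c * a + (1 - c) * b) ≤ c * W y a + (1 - c) * W y b := by
        intro a ha b hb y hy
        exact (ih c ⟨hc0, hc1⟩ _ ha _ hb _ hy _ hy).2
      have hTp := Tr_mem hl0 hl1 hl01 hp
      have hTp' := Tr_mem hl0 hl1 hl01 hp'
      have hTp1 := Tr_mem hl0 hl1 hl01 hp1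
      have hTp2 := Tr_mem hl0 hl1 hl01 hp2
      have hTa := Tr_affine l0 l1 c p p'
      constructor
      · -- first coordinate
        show Bop l0 l1 β Rl Rh Cl Ch W _ _ ≤ _
        unfold Bop
        apply max4_convex_le hc0 hc1
        · exact le_of_eq (by simp only [Q]; ring)
        · exact le_of_eq (by simp only [Q]; ring)
        · -- B2 action
          simp only [Q, hTa]
          have A := IH1 _ hTp _ hTp' _ hl1
          have B := IH1 _ hTp _ hTp' _ hl0
          have k1 : (0:ℝ) ≤ β * p2 := mul_nonneg hβ0 hp2.1
          have k2 : (0:ℝ) ≤ β * (1 - p2) := mul_nonneg hβ0 (by linarith [hp2.2])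
          have hA := mul_le_mul_of_nonneg_left A k1
          have hB := mul_le_mul_of_nonneg_left B k2
          linarith [hA, hB]
        · -- Br action
          simp only [Q, hTa]
          have A := IH1 _ hTp _ hTp' _ hTp2
          linarith [mul_le_mul_of_nonneg_left A hβ0]
      · -- second coordinate
        show Bop l0 l1 β Rl Rh Cl Ch W _ _ ≤ _
        unfold Bop
        apply max4_convex_le hc0 hc1
        · exact le_of_eq (by simp only [Q]; ring)
        · -- B1 action
          simp only [Q, hTa]
          have A := IH2 _ hTp _ hTp' _ hl1
          have B := IH2 _ hTp _ hTp' _ hl0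
          have k1 : (0:ℝ) ≤ β * p1 := mul_nonneg hβ0 hp1.1
          have k2 : (0:ℝ) ≤ β * (1 - p1) := mul_nonneg hβ0 (by linarith [hp1.2])
          have hA := mul_le_mul_of_nonneg_left A k1
          have hB := mul_le_mul_of_nonneg_left B k2
          linarith [hA, hB]
        · exact le_of_eq (by simp only [Q]; ring)
        · -- Br action
          simp only [Q, hTa]
          have A := IH2 _ hTp _ hTp' _ hTp1
          linarith [mul_le_mul_of_nonneg_left A hβ0]
end
end

section
/- (Lemma 3) The value function is symmetric with respect to the line p1 = p2: for all (p1,p2) ∈ [0,1]×[0,1], V(p1,p2) = V(p2,p1). -/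
open Set

noncomputable section

/-- Lemma 3: the value function is symmetric with respect to the line `p1 = p2`. -/
theorem value_symmetric
    (l0 l1 β Rl Rh Cl Ch : ℝ)
    (hl0 : l0 ∈ Icc (0:ℝ) 1) (hl1 : l1 ∈ Icc (0:ℝ) 1) (hl01 : l0 < l1)
    (hβ0 : 0 ≤ β) (hβ1 : β < 1)
    (hRl : 0 < Rl) (hRh : 0 < Rh) (hCl : 0 < Cl) (hCh : 0 < Ch)
    (hRlh : Rl < Rh) (hRh2 : Rh < 2 * Rl)
    (hClh : Cl < Ch) (hCh2 : Ch < 2 * Cl)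
    (hRhCh : Ch < Rh) (hRlCl : Cl < Rl)
    (V : ℝ → ℝ → ℝ) (hVbdd : BddOnSq V)
    (hVfix : IsFix l0 l1 β Rl Rh Cl Ch V)
    (p1 : ℝ) (hp1 : p1 ∈ Icc (0:ℝ) 1) (p2 : ℝ) (hp2 : p2 ∈ Icc (0:ℝ) 1) :
    V p1 p2 = V p2 p1 := by
  obtain ⟨M, hM⟩ := hVbdd
  set S : Set ℝ :=
    (fun pq : ℝ × ℝ => |V pq.1 pq.2 - V pq.2 pq.1|) '' (Icc (0:ℝ) 1 ×ˢ Icc (0:ℝ) 1) with hS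
  have h00 : ((0:ℝ), (0:ℝ)) ∈ Icc (0:ℝ) 1 ×ˢ Icc (0:ℝ) 1 := by
    constructor <;> exact ⟨le_refl 0, zero_le_one⟩
  have hSne : S.Nonempty := ⟨_, ⟨((0:ℝ),(0:ℝ)), h00, rfl⟩⟩
  have hSbdd : BddAbove S := by
    refine ⟨2 * M, ?_⟩
    rintro x ⟨⟨a, b⟩, ⟨ha, hb⟩, rfl⟩
    have h1 := hM a ha b hb
    have h2 := hM b hb a ha
    calc |V a b - V b a| ≤ |V a b| + |V b a| := abs_sub _ _
      _ ≤ 2 * M := by linarith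
  set D := sSup S with hD
  clear_value D
  have hmem : ∀ a ∈ Icc (0:ℝ) 1, ∀ b ∈ Icc (0:ℝ) 1, |V a b - V b a| ≤ D := by
    intro a ha b hb
    rw [hD]
    exact le_csSup hSbdd ⟨(a, b), ⟨ha, hb⟩, rfl⟩
  have hD0 : 0 ≤ D := le_trans (abs_nonneg _) (hmem 0 ⟨le_refl 0, zero_le_one⟩ 0 ⟨le_refl 0, zero_le_one⟩)
  have hTr : ∀ p ∈ Icc (0:ℝ) 1, Tr l0 l1 p ∈ Icc (0:ℝ) 1 := by
    intro p hp
    obtain ⟨h0, h1⟩ := hp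
    obtain ⟨hl00, hl01'⟩ := hl0
    obtain ⟨hl10, hl11⟩ := hl1
    constructor
    · simp only [Tr]; nlinarith
    · simp only [Tr]; nlinarith
  have key : ∀ a ∈ Icc (0:ℝ) 1, ∀ b ∈ Icc (0:ℝ) 1, |V a b - V b a| ≤ β * D := by
    intro a ha b hb
    have hcomm : Bop l0 l1 β Rl Rh Cl Ch V b a =
        max (max (Q l0 l1 β Rl Rh Cl Ch V PAct.Bb b a)
                 (Q l0 l1 β Rl Rh Cl Ch V PAct.B2 b a))
            (max (Q l0 l1 β Rl Rh Cl Ch V PAct.B1 b a)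
                 (Q l0 l1 β Rl Rh Cl Ch V PAct.Br b a)) := by
      unfold Bop
      exact max_max_max_comm _ _ _ _
    have hBb : |Q l0 l1 β Rl Rh Cl Ch V PAct.Bb a b
        - Q l0 l1 β Rl Rh Cl Ch V PAct.Bb b a| ≤ β * D := by
      have e : Q l0 l1 β Rl Rh Cl Ch V PAct.Bb a b
          - Q l0 l1 β Rl Rh Cl Ch V PAct.Bb b a
          = β * ((a - b) * (V l1 l0 - V l0 l1)) := by
        simp only [Q]; ring
      rw [e, abs_mul, abs_mul, abs_of_nonneg hβ0]
      have hd := hmem l1 hl1 l0 hl0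
      have hab : |a - b| ≤ 1 := by
        rw [abs_le]; constructor <;> [linarith [ha.1, hb.2]; linarith [ha.2, hb.1]]
      have h1 : |a - b| * |V l1 l0 - V l0 l1| ≤ 1 * D :=
        mul_le_mul hab hd (abs_nonneg _) zero_le_one
      have h2 : |a - b| * |V l1 l0 - V l0 l1| ≤ D := by linarith
      exact le_trans (mul_le_mul_of_nonneg_left h2 hβ0) (le_refl _)
    have hB1 : |Q l0 l1 β Rl Rh Cl Ch V PAct.B1 a b
        - Q l0 l1 β Rl Rh Cl Ch V PAct.B2 b a| ≤ β * D := by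
      set u := V l1 (Tr l0 l1 b) - V (Tr l0 l1 b) l1 with hu_def
      set w := V l0 (Tr l0 l1 b) - V (Tr l0 l1 b) l0 with hw_def
      have e : Q l0 l1 β Rl Rh Cl Ch V PAct.B1 a b
          - Q l0 l1 β Rl Rh Cl Ch V PAct.B2 b a
          = β * (a * u + (1 - a) * w) := by
        simp only [Q, hu_def, hw_def]; ring
      have hu : |u| ≤ D := hmem l1 hl1 _ (hTr b hb)
      have hw : |w| ≤ D := hmem l0 hl0 _ (hTr b hb)
      rw [e, abs_mul, abs_of_nonneg hβ0]
      have h2 : |a * u + (1 - a) * w| ≤ D := by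
        calc |a * u + (1 - a) * w| ≤ |a * u| + |(1 - a) * w| := abs_add_le _ _
          _ = a * |u| + (1 - a) * |w| := by
              rw [abs_mul, abs_mul, abs_of_nonneg ha.1, abs_of_nonneg (show (0:ℝ) ≤ 1 - a by linarith [ha.2])]
          _ ≤ D := by
              have h1 : a * |u| ≤ a * D := mul_le_mul_of_nonneg_left hu ha.1
              have h2 : (1 - a) * |w| ≤ (1 - a) * D :=
                mul_le_mul_of_nonneg_left hw (by linarith [ha.2])
              nlinarith
      exact mul_le_mul_of_nonneg_left h2 hβ0
    have hB2 : |Q l0 l1 β Rl Rh Cl Ch V PAct.B2 a b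
        - Q l0 l1 β Rl Rh Cl Ch V PAct.B1 b a| ≤ β * D := by
      set u := V (Tr l0 l1 a) l1 - V l1 (Tr l0 l1 a) with hu_def
      set w := V (Tr l0 l1 a) l0 - V l0 (Tr l0 l1 a) with hw_def
      have e : Q l0 l1 β Rl Rh Cl Ch V PAct.B2 a b
          - Q l0 l1 β Rl Rh Cl Ch V PAct.B1 b a
          = β * (b * u + (1 - b) * w) := by
        simp only [Q, hu_def, hw_def]; ring
      have hu : |u| ≤ D := hmem _ (hTr a ha) l1 hl1
      have hw : |w| ≤ D := hmem _ (hTr a ha) l0 hl0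
      rw [e, abs_mul, abs_of_nonneg hβ0]
      have h2 : |b * u + (1 - b) * w| ≤ D := by
        calc |b * u + (1 - b) * w| ≤ |b * u| + |(1 - b) * w| := abs_add_le _ _
          _ = b * |u| + (1 - b) * |w| := by
              rw [abs_mul, abs_mul, abs_of_nonneg hb.1, abs_of_nonneg (show (0:ℝ) ≤ 1 - b by linarith [hb.2])]
          _ ≤ D := by
              have h1 : b * |u| ≤ b * D := mul_le_mul_of_nonneg_left hu hb.1
              have h2 : (1 - b) * |w| ≤ (1 - b) * D :=
                mul_le_mul_of_nonneg_left hw (by linarith [hb.2])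
              nlinarith
      exact mul_le_mul_of_nonneg_left h2 hβ0
    have hBr : |Q l0 l1 β Rl Rh Cl Ch V PAct.Br a b
        - Q l0 l1 β Rl Rh Cl Ch V PAct.Br b a| ≤ β * D := by
      have e : Q l0 l1 β Rl Rh Cl Ch V PAct.Br a b
          - Q l0 l1 β Rl Rh Cl Ch V PAct.Br b a
          = β * (V (Tr l0 l1 a) (Tr l0 l1 b) - V (Tr l0 l1 b) (Tr l0 l1 a)) := by
        simp only [Q]; ring
      have hd := hmem _ (hTr a ha) _ (hTr b hb)
      rw [e, abs_mul, abs_of_nonneg hβ0]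
      exact mul_le_mul_of_nonneg_left hd hβ0
    have touter := abs_max_sub_max_le_max
      (max (Q l0 l1 β Rl Rh Cl Ch V PAct.Bb a b) (Q l0 l1 β Rl Rh Cl Ch V PAct.B1 a b))
      (max (Q l0 l1 β Rl Rh Cl Ch V PAct.B2 a b) (Q l0 l1 β Rl Rh Cl Ch V PAct.Br a b))
      (max (Q l0 l1 β Rl Rh Cl Ch V PAct.Bb b a) (Q l0 l1 β Rl Rh Cl Ch V PAct.B2 b a))
      (max (Q l0 l1 β Rl Rh Cl Ch V PAct.B1 b a) (Q l0 l1 β Rl Rh Cl Ch V PAct.Br b a))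
    have t1 := abs_max_sub_max_le_max
      (Q l0 l1 β Rl Rh Cl Ch V PAct.Bb a b) (Q l0 l1 β Rl Rh Cl Ch V PAct.B1 a b)
      (Q l0 l1 β Rl Rh Cl Ch V PAct.Bb b a) (Q l0 l1 β Rl Rh Cl Ch V PAct.B2 b a)
    have t2 := abs_max_sub_max_le_max
      (Q l0 l1 β Rl Rh Cl Ch V PAct.B2 a b) (Q l0 l1 β Rl Rh Cl Ch V PAct.Br a b)
      (Q l0 l1 β Rl Rh Cl Ch V PAct.B1 b a) (Q l0 l1 β Rl Rh Cl Ch V PAct.Br b a)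
    rw [hVfix a ha b hb, hVfix b hb a ha, hcomm]
    show |max (max (Q l0 l1 β Rl Rh Cl Ch V PAct.Bb a b) (Q l0 l1 β Rl Rh Cl Ch V PAct.B1 a b))
             (max (Q l0 l1 β Rl Rh Cl Ch V PAct.B2 a b) (Q l0 l1 β Rl Rh Cl Ch V PAct.Br a b))
        - max (max (Q l0 l1 β Rl Rh Cl Ch V PAct.Bb b a) (Q l0 l1 β Rl Rh Cl Ch V PAct.B2 b a))
             (max (Q l0 l1 β Rl Rh Cl Ch V PAct.B1 b a) (Q l0 l1 β Rl Rh Cl Ch V PAct.Br b a))| ≤ β * D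
    exact le_trans touter (max_le (le_trans t1 (max_le hBb hB1)) (le_trans t2 (max_le hB2 hBr)))
  have hDle : D ≤ β * D := by
    rw [hD]
    refine csSup_le hSne ?_
    rintro x ⟨⟨a, b⟩, ⟨ha, hb⟩, rfl⟩
    rw [← hD]
    exact key a ha b hb
  have hDzero : D ≤ 0 := by
    by_contra hc
    push_neg at hc
    have := mul_lt_mul_of_pos_right hβ1 hc
    linarith
  have h := key p1 hp1 p2 hp2
  have h0 : |V p1 p2 - V p2 p1| ≤ 0 :=
    le_trans h (mul_nonpos_of_nonneg_of_nonpos hβ0 hDzero)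
  have := abs_nonneg (V p1 p2 - V p2 p1)
  have : |V p1 p2 - V p2 p1| = 0 := le_antisymm h0 this
  have := abs_eq_zero.mp this
  linarith
end
end

section
/- (Theorem 2, part 1) The decision regions Φ_{B_r} and Φ_{B_b} are self-symmetric with respect to the line p1 = p2: if (p1,p2) ∈ Φ_{B_r} then (p2,p1) ∈ Φ_{B_r}, and if (p1,p2) ∈ Φ_{B_b} then (p2,p1) ∈ Φ_{B_b}. -/
open Set

noncomputable section

/-- Decision region of action `a`: beliefs where action `a` achieves the value. -/
def Phi (l0 l1 β Rl Rh Cl Ch : ℝ) (V : ℝ → ℝ → ℝ) (a : PAct) : Set (ℝ × ℝ) :=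
  {p : ℝ × ℝ | p.1 ∈ Icc (0:ℝ) 1 ∧ p.2 ∈ Icc (0:ℝ) 1 ∧
    V p.1 p.2 = Q l0 l1 β Rl Rh Cl Ch V a p.1 p.2}

/-- Theorem 2, part 1: `Φ_Br` and `Φ_Bb` are self-symmetric w.r.t. the line `p1 = p2`. -/
theorem regions_self_symmetric
    (l0 l1 β Rl Rh Cl Ch : ℝ)
    (hl0 : l0 ∈ Icc (0:ℝ) 1) (hl1 : l1 ∈ Icc (0:ℝ) 1) (hl01 : l0 < l1)
    (hβ0 : 0 ≤ β) (hβ1 : β < 1)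
    (hRl : 0 < Rl) (hRh : 0 < Rh) (hCl : 0 < Cl) (hCh : 0 < Ch)
    (hRlh : Rl < Rh) (hRh2 : Rh < 2 * Rl)
    (hClh : Cl < Ch) (hCh2 : Ch < 2 * Cl)
    (hRhCh : Ch < Rh) (hRlCl : Cl < Rl)
    (V : ℝ → ℝ → ℝ) (hVbdd : BddOnSq V)
    (hVfix : IsFix l0 l1 β Rl Rh Cl Ch V)
    (p1 p2 : ℝ) :
    ((p1, p2) ∈ Phi l0 l1 β Rl Rh Cl Ch V PAct.Br → (p2, p1) ∈ Phi l0 l1 β Rl Rh Cl Ch V PAct.Br) ∧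
    ((p1, p2) ∈ Phi l0 l1 β Rl Rh Cl Ch V PAct.Bb → (p2, p1) ∈ Phi l0 l1 β Rl Rh Cl Ch V PAct.Bb) := by
  -- Tr maps [0,1] into [0,1]
  obtain ⟨hl00, hl01'⟩ := hl0
  obtain ⟨hl10, hl11⟩ := hl1
  have hT : ∀ p ∈ Icc (0:ℝ) 1, Tr l0 l1 p ∈ Icc (0:ℝ) 1 := by
    intro p hp
    obtain ⟨hp0, hp1⟩ := hp
    constructor
    · have : 0 ≤ (l1 - l0) * p := mul_nonneg (by linarith) hp0
      simp only [Tr]; linarith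
    · have : (l1 - l0) * p ≤ (l1 - l0) * 1 :=
        mul_le_mul_of_nonneg_left hp1 (by linarith)
      simp only [Tr]; linarith
  obtain ⟨M, hM⟩ := hVbdd
  have hM0 : (0:ℝ) ≤ M := le_trans (abs_nonneg _)
    (hM 0 ⟨le_refl _, zero_le_one⟩ 0 ⟨le_refl _, zero_le_one⟩)
  -- key contraction estimate
  have key : ∀ n : ℕ, ∀ a ∈ Icc (0:ℝ) 1, ∀ b ∈ Icc (0:ℝ) 1,
      |V a b - V b a| ≤ β ^ n * (2 * M) := by
    intro n
    induction n with
    | zero =>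
      intro a ha b hb
      have h1 := hM a ha b hb
      have h2 := hM b hb a ha
      have := abs_sub (V a b) (V b a)
      simp only [pow_zero, one_mul]
      calc |V a b - V b a| ≤ |V a b| + |V b a| := abs_sub _ _
        _ ≤ 2 * M := by linarith
    | succ n ih =>
      intro a ha b hb
      set X := β ^ n * (2 * M) with hXdef
      have hX0 : 0 ≤ X := mul_nonneg (pow_nonneg hβ0 n) (by linarith)
      obtain ⟨ha0, ha1⟩ := ha
      obtain ⟨hb0, hb1⟩ := hb
      have hTa := hT a ⟨ha0, ha1⟩
      have hTb := hT b ⟨hb0, hb1⟩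
      have h01 : (0:ℝ) ∈ Icc (0:ℝ) 1 := ⟨le_refl _, zero_le_one⟩
      have hl0m : l0 ∈ Icc (0:ℝ) 1 := ⟨hl00, hl01'⟩
      have hl1m : l1 ∈ Icc (0:ℝ) 1 := ⟨hl10, hl11⟩
      rw [hVfix a ⟨ha0, ha1⟩ b ⟨hb0, hb1⟩, hVfix b ⟨hb0, hb1⟩ a ⟨ha0, ha1⟩]
      have e2 : Bop l0 l1 β Rl Rh Cl Ch V b a =
          max (max (Q l0 l1 β Rl Rh Cl Ch V PAct.Bb b a)
                   (Q l0 l1 β Rl Rh Cl Ch V PAct.B2 b a))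
              (max (Q l0 l1 β Rl Rh Cl Ch V PAct.B1 b a)
                   (Q l0 l1 β Rl Rh Cl Ch V PAct.Br b a)) := by
        unfold Bop
        exact max_max_max_comm _ _ _ _
      rw [e2]
      unfold Bop
      -- four pairwise bounds
      have hbb : |Q l0 l1 β Rl Rh Cl Ch V PAct.Bb a b -
          Q l0 l1 β Rl Rh Cl Ch V PAct.Bb b a| ≤ β ^ (n+1) * (2 * M) := by
        have hd : Q l0 l1 β Rl Rh Cl Ch V PAct.Bb a b -
            Q l0 l1 β Rl Rh Cl Ch V PAct.Bb b a
            = β * ((a - b) * (V l1 l0 - V l0 l1)) := by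
          simp only [Q]; ring
        rw [hd, abs_mul, abs_mul, abs_of_nonneg hβ0]
        have hab : |a - b| ≤ 1 := by
          rw [abs_sub_le_iff]; constructor <;> linarith
        have hV10 := ih l1 hl1m l0 hl0m
        calc β * (|a - b| * |V l1 l0 - V l0 l1|) ≤ β * (1 * X) := by
              apply mul_le_mul_of_nonneg_left _ hβ0
              exact mul_le_mul hab hV10 (abs_nonneg _) zero_le_one
          _ = β ^ (n+1) * (2 * M) := by rw [hXdef]; ring
      have hconv : ∀ u v : ℝ, |u| ≤ X → |v| ≤ X → |a * u + (1 - a) * v| ≤ X := by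
        intro u v hu hv
        calc |a * u + (1 - a) * v| ≤ |a * u| + |(1 - a) * v| := abs_add_le _ _
          _ = a * |u| + (1 - a) * |v| := by
              rw [abs_mul, abs_mul, abs_of_nonneg ha0, abs_of_nonneg (show (0:ℝ) ≤ 1 - a by linarith)]
          _ ≤ a * X + (1 - a) * X := add_le_add
              (mul_le_mul_of_nonneg_left hu ha0)
              (mul_le_mul_of_nonneg_left hv (by linarith))
          _ = X := by ring
      have h12 : |Q l0 l1 β Rl Rh Cl Ch V PAct.B1 a b -
          Q l0 l1 β Rl Rh Cl Ch V PAct.B2 b a| ≤ β ^ (n+1) * (2 * M) := by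
        have hd : Q l0 l1 β Rl Rh Cl Ch V PAct.B1 a b -
            Q l0 l1 β Rl Rh Cl Ch V PAct.B2 b a
            = β * (a * (V l1 (Tr l0 l1 b) - V (Tr l0 l1 b) l1) +
                   (1 - a) * (V l0 (Tr l0 l1 b) - V (Tr l0 l1 b) l0)) := by
          simp only [Q]; ring
        rw [hd, abs_mul, abs_of_nonneg hβ0]
        have h1 := ih l1 hl1m (Tr l0 l1 b) hTb
        have h2 := ih l0 hl0m (Tr l0 l1 b) hTb
        calc β * |a * (V l1 (Tr l0 l1 b) - V (Tr l0 l1 b) l1) +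
                 (1 - a) * (V l0 (Tr l0 l1 b) - V (Tr l0 l1 b) l0)|
            ≤ β * X := mul_le_mul_of_nonneg_left (hconv _ _ h1 h2) hβ0
          _ = β ^ (n+1) * (2 * M) := by rw [hXdef]; ring
      have h21 : |Q l0 l1 β Rl Rh Cl Ch V PAct.B2 a b -
          Q l0 l1 β Rl Rh Cl Ch V PAct.B1 b a| ≤ β ^ (n+1) * (2 * M) := by
        have hd : Q l0 l1 β Rl Rh Cl Ch V PAct.B2 a b -
            Q l0 l1 β Rl Rh Cl Ch V PAct.B1 b a
            = β * (b * (V (Tr l0 l1 a) l1 - V l1 (Tr l0 l1 a)) +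
                   (1 - b) * (V (Tr l0 l1 a) l0 - V l0 (Tr l0 l1 a))) := by
          simp only [Q]; ring
        rw [hd, abs_mul, abs_of_nonneg hβ0]
        have h1 := ih (Tr l0 l1 a) hTa l1 hl1m
        have h2 := ih (Tr l0 l1 a) hTa l0 hl0m
        have hconv' : ∀ u v : ℝ, |u| ≤ X → |v| ≤ X →
            |b * u + (1 - b) * v| ≤ X := by
          intro u v hu hv
          calc |b * u + (1 - b) * v| ≤ |b * u| + |(1 - b) * v| := abs_add_le _ _
            _ = b * |u| + (1 - b) * |v| := by
                rw [abs_mul, abs_mul, abs_of_nonneg hb0, abs_of_nonneg (show (0:ℝ) ≤ 1 - b by linarith)]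
            _ ≤ b * X + (1 - b) * X := add_le_add
                (mul_le_mul_of_nonneg_left hu hb0)
                (mul_le_mul_of_nonneg_left hv (by linarith))
            _ = X := by ring
        calc β * |b * (V (Tr l0 l1 a) l1 - V l1 (Tr l0 l1 a)) +
                 (1 - b) * (V (Tr l0 l1 a) l0 - V l0 (Tr l0 l1 a))|
            ≤ β * X := mul_le_mul_of_nonneg_left (hconv' _ _ h1 h2) hβ0
          _ = β ^ (n+1) * (2 * M) := by rw [hXdef]; ring
      have hrr : |Q l0 l1 β Rl Rh Cl Ch V PAct.Br a b -
          Q l0 l1 β Rl Rh Cl Ch V PAct.Br b a| ≤ β ^ (n+1) * (2 * M) := by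
        have hd : Q l0 l1 β Rl Rh Cl Ch V PAct.Br a b -
            Q l0 l1 β Rl Rh Cl Ch V PAct.Br b a
            = β * (V (Tr l0 l1 a) (Tr l0 l1 b) - V (Tr l0 l1 b) (Tr l0 l1 a)) := by
          simp only [Q]; ring
        rw [hd, abs_mul, abs_of_nonneg hβ0]
        have h1 := ih (Tr l0 l1 a) hTa (Tr l0 l1 b) hTb
        calc β * |V (Tr l0 l1 a) (Tr l0 l1 b) - V (Tr l0 l1 b) (Tr l0 l1 a)|
            ≤ β * X := mul_le_mul_of_nonneg_left h1 hβ0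
          _ = β ^ (n+1) * (2 * M) := by rw [hXdef]; ring
      refine le_trans (abs_max_sub_max_le_max _ _ _ _) (max_le ?_ ?_)
      · exact le_trans (abs_max_sub_max_le_max _ _ _ _) (max_le hbb h12)
      · exact le_trans (abs_max_sub_max_le_max _ _ _ _) (max_le h21 hrr)
  -- symmetry of V
  have hsym : ∀ a ∈ Icc (0:ℝ) 1, ∀ b ∈ Icc (0:ℝ) 1, V a b = V b a := by
    intro a ha b hb
    have hlim : Filter.Tendsto (fun n : ℕ => β ^ n * (2 * M)) Filter.atTop (nhds 0) := by
      have := tendsto_pow_atTop_nhds_zero_of_lt_one hβ0 hβ1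
      simpa using this.mul_const (2 * M)
    have hle : |V a b - V b a| ≤ 0 :=
      ge_of_tendsto hlim (Filter.Eventually.of_forall fun n => key n a ha b hb)
    have := le_antisymm hle (abs_nonneg _)
    have := abs_eq_zero.mp this
    linarith [sub_eq_zero.mp this]
  constructor
  · rintro ⟨hp1, hp2, hv⟩
    refine ⟨hp2, hp1, ?_⟩
    have hTp1 := hT p1 hp1
    have hTp2 := hT p2 hp2
    simp only [Q] at hv ⊢
    rw [← hsym p1 hp1 p2 hp2, hv, hsym (Tr l0 l1 p1) hTp1 (Tr l0 l1 p2) hTp2]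
  · rintro ⟨hp1, hp2, hv⟩
    refine ⟨hp2, hp1, ?_⟩
    have h10 : V l1 l0 = V l0 l1 := hsym l1 ⟨hl10, hl11⟩ l0 ⟨hl00, hl01'⟩
    have hVs := hsym p1 hp1 p2 hp2
    simp only [Q] at hv ⊢
    rw [← hVs, hv]
    linear_combination (β * (p1 - p2)) * h10
end
end

section
/- (Theorem 2, part 2) The decision regions Φ_{B_1} and Φ_{B_2} are mirror images with respect to the line p1 = p2: (p1,p2) ∈ Φ_{B_1} if and only if (p2,p1) ∈ Φ_{B_2}. -/
open Set

noncomputable section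

/-- Convex combination bound. -/
lemma combo_abs_le (c t x y : ℝ) (ht : 0 ≤ t) (ht1 : t ≤ 1)
    (hx : |x| ≤ c) (hy : |y| ≤ c) : |t * x + (1 - t) * y| ≤ c := by
  have h1 := abs_add_le (t * x) ((1 - t) * y)
  rw [abs_mul, abs_mul, abs_of_nonneg ht,
    abs_of_nonneg (by linarith : (0:ℝ) ≤ 1 - t)] at h1
  nlinarith [abs_nonneg x, abs_nonneg y]

/-- Theorem 2, part 2: `Φ_B1` and `Φ_B2` are mirror images w.r.t. the line `p1 = p2`. -/
theorem regions_mirror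
    (l0 l1 β Rl Rh Cl Ch : ℝ)
    (hl0 : l0 ∈ Icc (0:ℝ) 1) (hl1 : l1 ∈ Icc (0:ℝ) 1) (hl01 : l0 < l1)
    (hβ0 : 0 ≤ β) (hβ1 : β < 1)
    (hRl : 0 < Rl) (hRh : 0 < Rh) (hCl : 0 < Cl) (hCh : 0 < Ch)
    (hRlh : Rl < Rh) (hRh2 : Rh < 2 * Rl)
    (hClh : Cl < Ch) (hCh2 : Ch < 2 * Cl)
    (hRhCh : Ch < Rh) (hRlCl : Cl < Rl)
    (V : ℝ → ℝ → ℝ) (hVbdd : BddOnSq V)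
    (hVfix : IsFix l0 l1 β Rl Rh Cl Ch V)
    (p1 p2 : ℝ) :
    (p1, p2) ∈ Phi l0 l1 β Rl Rh Cl Ch V PAct.B1 ↔ (p2, p1) ∈ Phi l0 l1 β Rl Rh Cl Ch V PAct.B2 := by
  have hTr : ∀ p ∈ Icc (0:ℝ) 1, Tr l0 l1 p ∈ Icc (0:ℝ) 1 := by
    intro p hp
    obtain ⟨hp0, hp1⟩ := hp
    constructor
    · have : 0 ≤ (l1 - l0) * p := mul_nonneg (by linarith) hp0
      simp only [Tr]; linarith [hl0.1]
    · have h1 : (l1 - l0) * p ≤ (l1 - l0) * 1 :=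
        mul_le_mul_of_nonneg_left hp1 (by linarith)
      simp only [Tr]; nlinarith [hl1.2]
  set W : ℝ → ℝ → ℝ := fun a b => V b a with hWdef
  have hQBb : ∀ a b : ℝ, Q l0 l1 β Rl Rh Cl Ch W PAct.Bb a b
      = Q l0 l1 β Rl Rh Cl Ch V PAct.Bb b a := by
    intro a b; simp only [Q, hWdef]; try ring
  have hQB1 : ∀ a b : ℝ, Q l0 l1 β Rl Rh Cl Ch W PAct.B1 a b
      = Q l0 l1 β Rl Rh Cl Ch V PAct.B2 b a := by
    intro a b; simp only [Q, hWdef]; try ring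
  have hQB2 : ∀ a b : ℝ, Q l0 l1 β Rl Rh Cl Ch W PAct.B2 a b
      = Q l0 l1 β Rl Rh Cl Ch V PAct.B1 b a := by
    intro a b; simp only [Q, hWdef]; try ring
  have hQBr : ∀ a b : ℝ, Q l0 l1 β Rl Rh Cl Ch W PAct.Br a b
      = Q l0 l1 β Rl Rh Cl Ch V PAct.Br b a := by
    intro a b; simp only [Q, hWdef]
  have hWfix : IsFix l0 l1 β Rl Rh Cl Ch W := by
    intro a ha b hb
    have h := hVfix b hb a ha
    show V b a = _
    rw [h]
    simp only [Bop, hQBb, hQB1, hQB2, hQBr]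
    rw [max_max_max_comm]
  have key : ∀ c : ℝ, (∀ a ∈ Icc (0:ℝ) 1, ∀ b ∈ Icc (0:ℝ) 1, |V a b - W a b| ≤ c) →
      ∀ a ∈ Icc (0:ℝ) 1, ∀ b ∈ Icc (0:ℝ) 1, |V a b - W a b| ≤ β * c := by
    intro c hc a ha b hb
    rw [hVfix a ha b hb, hWfix a ha b hb]
    have hBb : |Q l0 l1 β Rl Rh Cl Ch V PAct.Bb a b
        - Q l0 l1 β Rl Rh Cl Ch W PAct.Bb a b| ≤ β * c := by
      have e : Q l0 l1 β Rl Rh Cl Ch V PAct.Bb a b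
          - Q l0 l1 β Rl Rh Cl Ch W PAct.Bb a b
          = β * (a * (b * (V l1 l1 - W l1 l1) + (1 - b) * (V l1 l0 - W l1 l0))
               + (1 - a) * (b * (V l0 l1 - W l0 l1) + (1 - b) * (V l0 l0 - W l0 l0))) := by
        simp only [Q]; ring
      rw [e, abs_mul, abs_of_nonneg hβ0]
      refine mul_le_mul_of_nonneg_left ?_ hβ0
      exact combo_abs_le c a _ _ ha.1 ha.2
        (combo_abs_le c b _ _ hb.1 hb.2 (hc l1 hl1 l1 hl1) (hc l1 hl1 l0 hl0))
        (combo_abs_le c b _ _ hb.1 hb.2 (hc l0 hl0 l1 hl1) (hc l0 hl0 l0 hl0))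
    have hB1 : |Q l0 l1 β Rl Rh Cl Ch V PAct.B1 a b
        - Q l0 l1 β Rl Rh Cl Ch W PAct.B1 a b| ≤ β * c := by
      have e : Q l0 l1 β Rl Rh Cl Ch V PAct.B1 a b
          - Q l0 l1 β Rl Rh Cl Ch W PAct.B1 a b
          = β * (a * (V l1 (Tr l0 l1 b) - W l1 (Tr l0 l1 b))
               + (1 - a) * (V l0 (Tr l0 l1 b) - W l0 (Tr l0 l1 b))) := by
        simp only [Q]; ring
      rw [e, abs_mul, abs_of_nonneg hβ0]
      refine mul_le_mul_of_nonneg_left ?_ hβ0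
      exact combo_abs_le c a _ _ ha.1 ha.2
        (hc l1 hl1 _ (hTr b hb)) (hc l0 hl0 _ (hTr b hb))
    have hB2 : |Q l0 l1 β Rl Rh Cl Ch V PAct.B2 a b
        - Q l0 l1 β Rl Rh Cl Ch W PAct.B2 a b| ≤ β * c := by
      have e : Q l0 l1 β Rl Rh Cl Ch V PAct.B2 a b
          - Q l0 l1 β Rl Rh Cl Ch W PAct.B2 a b
          = β * (b * (V (Tr l0 l1 a) l1 - W (Tr l0 l1 a) l1)
               + (1 - b) * (V (Tr l0 l1 a) l0 - W (Tr l0 l1 a) l0)) := by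
        simp only [Q]; ring
      rw [e, abs_mul, abs_of_nonneg hβ0]
      refine mul_le_mul_of_nonneg_left ?_ hβ0
      exact combo_abs_le c b _ _ hb.1 hb.2
        (hc _ (hTr a ha) l1 hl1) (hc _ (hTr a ha) l0 hl0)
    have hBr : |Q l0 l1 β Rl Rh Cl Ch V PAct.Br a b
        - Q l0 l1 β Rl Rh Cl Ch W PAct.Br a b| ≤ β * c := by
      have e : Q l0 l1 β Rl Rh Cl Ch V PAct.Br a b
          - Q l0 l1 β Rl Rh Cl Ch W PAct.Br a b
          = β * (V (Tr l0 l1 a) (Tr l0 l1 b) - W (Tr l0 l1 a) (Tr l0 l1 b)) := by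
        simp only [Q]; ring
      rw [e, abs_mul, abs_of_nonneg hβ0]
      exact mul_le_mul_of_nonneg_left (hc _ (hTr a ha) _ (hTr b hb)) hβ0
    simp only [Bop]
    exact le_trans (abs_max_sub_max_le_max _ _ _ _)
      (max_le (le_trans (abs_max_sub_max_le_max _ _ _ _) (max_le hBb hB1))
        (le_trans (abs_max_sub_max_le_max _ _ _ _) (max_le hB2 hBr)))
  obtain ⟨M, hM⟩ := hVbdd
  have h0 : ∀ a ∈ Icc (0:ℝ) 1, ∀ b ∈ Icc (0:ℝ) 1, |V a b - W a b| ≤ 2 * M := by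
    intro a ha b hb
    have h1 : |V a b - W a b| ≤ |V a b| + |W a b| := by
      rw [sub_eq_add_neg]
      exact le_trans (abs_add_le _ _) (by rw [abs_neg])
    have h2 : |W a b| = |V b a| := rfl
    have := hM a ha b hb
    have := hM b hb a ha
    rw [h2] at h1
    linarith
  have hn : ∀ n : ℕ, ∀ a ∈ Icc (0:ℝ) 1, ∀ b ∈ Icc (0:ℝ) 1,
      |V a b - W a b| ≤ β ^ n * (2 * M) := by
    intro n
    induction n with
    | zero => simpa using h0
    | succ n ih =>
      intro a ha b hb
      calc |V a b - W a b| ≤ β * (β ^ n * (2 * M)) := key _ ih a ha b hb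
        _ = β ^ (n + 1) * (2 * M) := by ring
  have hVsym : ∀ a ∈ Icc (0:ℝ) 1, ∀ b ∈ Icc (0:ℝ) 1, V a b = V b a := by
    intro a ha b hb
    have hlim : Filter.Tendsto (fun n : ℕ => β ^ n * (2 * M)) Filter.atTop (nhds 0) := by
      simpa using (tendsto_pow_atTop_nhds_zero_of_lt_one hβ0 hβ1).mul_const (2 * M)
    have hle : |V a b - W a b| ≤ 0 := ge_of_tendsto' hlim (fun n => hn n a ha b hb)
    have h2 : V a b - W a b = 0 := abs_nonpos_iff.mp hle
    have h3 : V a b = W a b := sub_eq_zero.mp h2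
    exact h3
  simp only [Phi, Set.mem_setOf_eq]
  constructor
  · rintro ⟨h1, h2, h3⟩
    refine ⟨h2, h1, ?_⟩
    have hQ : Q l0 l1 β Rl Rh Cl Ch V PAct.B1 p1 p2
        = Q l0 l1 β Rl Rh Cl Ch V PAct.B2 p2 p1 := by
      simp only [Q]
      rw [hVsym l1 hl1 _ (hTr p2 h2), hVsym l0 hl0 _ (hTr p2 h2)]
    rw [← hVsym p1 h1 p2 h2, h3, hQ]
  · rintro ⟨h2, h1, h3⟩
    refine ⟨h1, h2, ?_⟩
    have hQ : Q l0 l1 β Rl Rh Cl Ch V PAct.B1 p1 p2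
        = Q l0 l1 β Rl Rh Cl Ch V PAct.B2 p2 p1 := by
      simp only [Q]
      rw [hVsym l1 hl1 _ (hTr p2 h2), hVsym l0 hl0 _ (hTr p2 h2)]
    rw [hVsym p1 h1 p2 h2, h3, ← hQ]
end
end

section
/- The four corners of the belief space belong to the indicated decision regions: (0,0) ∈ Φ_{B_r}, (0,1) ∈ Φ_{B_2}, (1,0) ∈ Φ_{B_1}, and (1,1) ∈ Φ_{B_b}; that is, V(0,0) = V_{B_r}(0,0), V(0,1) = V_{B_2}(0,1), V(1,0) = V_{B_1}(1,0), and V(1,1) = V_{B_b}(1,1). -/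
open Set

noncomputable section

lemma max4a {a b c d : ℝ} (h1 : b ≤ a) (h2 : c ≤ a) (h3 : d ≤ a) :
    max (max a b) (max c d) = a := by
  rw [max_eq_left h1, max_eq_left (max_le h2 h3)]

lemma max4b {a b c d : ℝ} (h1 : a ≤ b) (h2 : c ≤ b) (h3 : d ≤ b) :
    max (max a b) (max c d) = b := by
  rw [max_eq_right h1, max_eq_left (max_le h2 h3)]

lemma max4c {a b c d : ℝ} (h1 : a ≤ c) (h2 : b ≤ c) (h3 : d ≤ c) :
    max (max a b) (max c d) = c := by
  rw [max_eq_left h3, max_eq_right (max_le h1 h2)]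

lemma max4d {a b c d : ℝ} (h1 : a ≤ d) (h2 : b ≤ d) (h3 : c ≤ d) :
    max (max a b) (max c d) = d := by
  rw [max_eq_right h3, max_eq_right (max_le h1 h2)]

/-- The four corners of the belief space belong to the indicated decision regions. -/
theorem corners_in_regions
    (l0 l1 β Rl Rh Cl Ch : ℝ)
    (hl0 : l0 ∈ Icc (0:ℝ) 1) (hl1 : l1 ∈ Icc (0:ℝ) 1) (hl01 : l0 < l1)
    (hβ0 : 0 ≤ β) (hβ1 : β < 1)
    (hRl : 0 < Rl) (hRh : 0 < Rh) (hCl : 0 < Cl) (hCh : 0 < Ch)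
    (hRlh : Rl < Rh) (hRh2 : Rh < 2 * Rl)
    (hClh : Cl < Ch) (hCh2 : Ch < 2 * Cl)
    (hRhCh : Ch < Rh) (hRlCl : Cl < Rl)
    (V : ℝ → ℝ → ℝ) (hVbdd : BddOnSq V)
    (hVfix : IsFix l0 l1 β Rl Rh Cl Ch V) :
    ((0:ℝ), (0:ℝ)) ∈ Phi l0 l1 β Rl Rh Cl Ch V PAct.Br ∧
    ((0:ℝ), (1:ℝ)) ∈ Phi l0 l1 β Rl Rh Cl Ch V PAct.B2 ∧
    ((1:ℝ), (0:ℝ)) ∈ Phi l0 l1 β Rl Rh Cl Ch V PAct.B1 ∧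
    ((1:ℝ), (1:ℝ)) ∈ Phi l0 l1 β Rl Rh Cl Ch V PAct.Bb := by
  have h0 : (0:ℝ) ∈ Icc (0:ℝ) 1 := by norm_num
  have h1 : (1:ℝ) ∈ Icc (0:ℝ) 1 := by norm_num
  refine ⟨⟨h0, h0, ?_⟩, ⟨h0, h1, ?_⟩, ⟨h1, h0, ?_⟩, ⟨h1, h1, ?_⟩⟩
  · rw [hVfix 0 h0 0 h0]
    simp only [Bop, Q, Tr]
    norm_num
    exact max4d (by linarith) (by linarith) (by linarith)
  · rw [hVfix 0 h0 1 h1]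
    simp only [Bop, Q, Tr]
    norm_num
    exact max4c (by linarith) (by linarith) (by linarith)
  · rw [hVfix 1 h1 0 h0]
    simp only [Bop, Q, Tr]
    norm_num
    exact max4b (by linarith) (by linarith) (by linarith)
  · rw [hVfix 1 h1 1 h1]
    simp only [Bop, Q, Tr]
    norm_num
    exact max4a (by linarith) (by linarith) (by linarith)
end
end
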